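/- Let u₁,…,u_{2n} ∈ ℝ^m be vectors such that the sum over j = 1,…,n of the wedge products u_j ∧ u_{j+n} equals zero (i.e., for all 1 ≤ k < l ≤ m, the sum over j of (u_j^k u_{j+n}^l − u_j^l u_{j+n}^k) vanishes). Then the 2n × m matrix B whose rows are u₁,…,u_{2n} has rank at most n. -/

import Mathlib

open Matrix


/-- If `u₁, …, u_{2n} ∈ ℝ^m` (the rows of `B`, indexed here by `Fin n ⊕ Fin n`,
with `Sum.inl j` corresponding to `u_j` and `Sum.inr j` to `u_{j+n}`) satisfy
`∑_{j=1}^n u_j ∧ u_{j+n} = 0`, i.e. for all `k < l` the sum of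
`u_j^k u_{j+n}^l − u_j^l u_{j+n}^k` vanishes, then the matrix `B` has rank at most `n`. -/
theorem low_rank_of_wedge_sum_zero (n m : ℕ) (B : Matrix (Fin n ⊕ Fin n) (Fin m) ℝ)
    (h : ∀ k l : Fin m, k < l →
      ∑ j : Fin n,
        (B (Sum.inl j) k * B (Sum.inr j) l - B (Sum.inl j) l * B (Sum.inr j) k) = 0) :
    B.rank ≤ n := by
  classical
  have hall : ∀ k l : Fin m,
      ∑ j : Fin n,
        (B (Sum.inl j) k * B (Sum.inr j) l - B (Sum.inl j) l * B (Sum.inr j) k) = 0 := by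
    intro k l
    rcases lt_trichotomy k l with hkl | hkl | hkl
    · exact h k l hkl
    · subst hkl; simp
    · have := h l k hkl
      have : -∑ j : Fin n,
          (B (Sum.inl j) l * B (Sum.inr j) k - B (Sum.inl j) k * B (Sum.inr j) l) = -0 :=
        congrArg Neg.neg this
      rw [← Finset.sum_neg_distrib] at this
      simpa [neg_sub] using this
  set J : Matrix (Fin n ⊕ Fin n) (Fin n ⊕ Fin n) ℝ := Matrix.fromBlocks 0 1 (-1) 0 with hJ
  set M : Matrix (Fin n ⊕ Fin n) (Fin m) ℝ := J * B with hM
  -- compute entries of M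
  have hMinl : ∀ (j : Fin n) (k : Fin m), M (Sum.inl j) k = B (Sum.inr j) k := by
    intro j k
    simp [hM, hJ, Matrix.mul_apply, Fintype.sum_sum_type, Matrix.one_apply,
      Finset.sum_ite_eq, Matrix.fromBlocks_apply₁₁, Matrix.fromBlocks_apply₁₂]
  have hMinr : ∀ (j : Fin n) (k : Fin m), M (Sum.inr j) k = -B (Sum.inl j) k := by
    intro j k
    simp [hM, hJ, Matrix.mul_apply, Fintype.sum_sum_type, Matrix.one_apply,
      Finset.sum_ite_eq, Matrix.fromBlocks_apply₂₁, Matrix.fromBlocks_apply₂₂]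
  have key : Bᵀ * M = 0 := by
    ext k l
    have := hall k l
    simp only [Matrix.mul_apply, Matrix.transpose_apply, Matrix.zero_apply,
      Fintype.sum_sum_type, hMinl, hMinr]
    rw [← Finset.sum_add_distrib] at *
    rw [← this]
    congr 1
    ext j
    ring
  have keyT : Mᵀ * B = 0 := by
    have := congrArg Matrix.transpose key
    simpa [Matrix.transpose_mul] using this
  -- ranges of B and M are disjoint
  have hdisj : Disjoint (LinearMap.range B.mulVecLin) (LinearMap.range M.mulVecLin) := by
    rw [Submodule.disjoint_def]
    rintro x hxB hxM
    obtain ⟨a, ha⟩ := hxB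
    obtain ⟨b, hb⟩ := hxM
    have hx : x ⬝ᵥ x = 0 := by
      have hb' : M *ᵥ b = x := by simpa using hb
      have ha' : B *ᵥ a = x := by simpa using ha
      have h1 : x ᵥ* M = 0 := by
        rw [← ha', ← Matrix.mulVec_transpose, Matrix.mulVec_mulVec, keyT, Matrix.zero_mulVec]
      rw [← hb', Matrix.dotProduct_mulVec, hb', h1, zero_dotProduct]
    exact dotProduct_self_eq_zero.mp hx
  -- rank B ≤ rank M
  have hJJ : Matrix.fromBlocks (0 : Matrix (Fin n) (Fin n) ℝ) (-1) 1 0 * J = 1 := by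
    rw [hJ, Matrix.fromBlocks_multiply]
    simp [Matrix.fromBlocks_one]
  have hrank_le : B.rank ≤ M.rank := by
    have : ((Matrix.fromBlocks (0 : Matrix (Fin n) (Fin n) ℝ) (-1) 1 0 : Matrix (Fin n ⊕ Fin n) (Fin n ⊕ Fin n) ℝ) * M) = B := by
      rw [hM, ← Matrix.mul_assoc, hJJ, Matrix.one_mul]
    calc B.rank = ((Matrix.fromBlocks (0 : Matrix (Fin n) (Fin n) ℝ) (-1) 1 0 : Matrix (Fin n ⊕ Fin n) (Fin n ⊕ Fin n) ℝ) * M).rank := by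
          rw [this]
      _ ≤ M.rank := Matrix.rank_mul_le_right _ _
  -- sum of ranks bounded by dimension
  have hsum : B.rank + M.rank ≤ 2 * n := by
    have := Submodule.finrank_add_finrank_le_of_disjoint hdisj
    have hdim : Module.finrank ℝ ((Fin n ⊕ Fin n) → ℝ) = 2 * n := by
      simp [Module.finrank_pi]
      ring
    rw [hdim] at this
    exact this
  omega
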